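/- Let X be a metric space of finite diameter, Λ : X → X a Lipschitz map with dist(Λ(a),Λ(b)) ≤ A·dist(a,b) for some A > 1, and v : X → ℝ a bounded Lipschitz function. Then for any d > 1 the series ∑_{n≥0} d⁻ⁿ · v ∘ Λⁿ converges pointwise to a function which is β-Hölder continuous for every β with 0 ≤ β ≤ 1 and β < log d / log A. -/

import Mathlib

set_option maxHeartbeats 1000000

lemma min_le_rpow_interp {a b β : ℝ} (ha : 0 ≤ a) (hb : 0 ≤ b)
    (hβ0 : 0 ≤ β) (hβ1 : β ≤ 1) : min a b ≤ a ^ (1 - β) * b ^ β := by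
  rcases le_total a b with hab | hab
  · rcases eq_or_lt_of_le ha with h0 | h0
    · have : min a b = 0 := by rw [← h0]; simp [hb]
      rw [this]
      positivity
    · rw [min_eq_left hab]
      calc a = a ^ (1 - β) * a ^ β := by
              rw [← Real.rpow_add h0]; norm_num
        _ ≤ a ^ (1 - β) * b ^ β :=
            mul_le_mul_of_nonneg_left (Real.rpow_le_rpow ha hab hβ0)
              (Real.rpow_nonneg ha _)
  · rcases eq_or_lt_of_le hb with h0 | h0
    · have : min a b = 0 := by rw [← h0]; simp [ha]
      rw [this]
      positivity
    · rw [min_eq_right hab]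
      calc b = b ^ (1 - β) * b ^ β := by
              rw [← Real.rpow_add h0]; norm_num
        _ ≤ a ^ (1 - β) * b ^ β :=
            mul_le_mul_of_nonneg_right
              (Real.rpow_le_rpow hb hab (by linarith)) (Real.rpow_nonneg hb _)

/-- Let `X` be a metric space of finite diameter, `Λ : X → X` with
`dist (Λ a) (Λ b) ≤ A · dist a b` for some `A > 1`, and `v` a bounded Lipschitz
function on `X`. Then for any `d > 1` the series `∑_{n ≥ 0} d⁻ⁿ v ∘ Λⁿ` converges
pointwise to a function which is `β`-Hölder continuous for every `β` with
`0 ≤ β ≤ 1` and `β < log d / log A`. -/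
theorem holder_series {X : Type*} [MetricSpace X]
    (D : ℝ) (hD : ∀ x y : X, dist x y ≤ D)
    (Λ : X → X) (A : ℝ) (hA : 1 < A)
    (hΛ : ∀ a b : X, dist (Λ a) (Λ b) ≤ A * dist a b)
    (v : X → ℝ) (Cv L : ℝ)
    (hv : ∀ x, |v x| ≤ Cv)
    (hL : ∀ x y, |v x - v y| ≤ L * dist x y)
    (d : ℝ) (hd : 1 < d) :
    ∃ u : X → ℝ,
      (∀ x, HasSum (fun n : ℕ => (d ^ n)⁻¹ * v (Λ^[n] x)) (u x)) ∧
      ∀ β : ℝ, 0 ≤ β → β ≤ 1 → β < Real.log d / Real.log A →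
        ∃ C : ℝ, ∀ x y, |u x - u y| ≤ C * dist x y ^ β := by
  have hd0 : (0 : ℝ) < d := lt_trans one_pos hd
  have hA0 : (0 : ℝ) < A := lt_trans one_pos hA
  set L' : ℝ := max L 0 with hL'def
  have hL'0 : 0 ≤ L' := le_max_right _ _
  have hCv : ∀ x : X, |v x| ≤ |Cv| := fun x => (hv x).trans (le_abs_self Cv)
  have hL' : ∀ x y : X, |v x - v y| ≤ L' * dist x y := fun x y =>
    (hL x y).trans (mul_le_mul_of_nonneg_right (le_max_left _ _) dist_nonneg)
  have hdist : ∀ (n : ℕ) (x y : X), dist (Λ^[n] x) (Λ^[n] y) ≤ A ^ n * dist x y := by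
    intro n
    induction n with
    | zero => intro x y; simp
    | succ n ih =>
      intro x y
      simp only [Function.iterate_succ_apply']
      calc dist (Λ (Λ^[n] x)) (Λ (Λ^[n] y)) ≤ A * dist (Λ^[n] x) (Λ^[n] y) := hΛ _ _
        _ ≤ A * (A ^ n * dist x y) := mul_le_mul_of_nonneg_left (ih x y) hA0.le
        _ = A ^ (n + 1) * dist x y := by ring
  have hdinv : d⁻¹ < 1 := inv_lt_one_of_one_lt₀ hd
  have hsum : ∀ x : X, Summable (fun n : ℕ => (d ^ n)⁻¹ * v (Λ^[n] x)) := by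
    intro x
    apply Summable.of_norm_bounded (g := fun n : ℕ => |Cv| * (d⁻¹) ^ n)
      ((summable_geometric_of_lt_one (by positivity) hdinv).mul_left _)
    intro n
    rw [Real.norm_eq_abs, abs_mul, abs_inv, abs_pow, abs_of_pos hd0, ← inv_pow, mul_comm]
    exact mul_le_mul_of_nonneg_right (hCv _) (by positivity)
  refine ⟨fun x => ∑' n : ℕ, (d ^ n)⁻¹ * v (Λ^[n] x), fun x => (hsum x).hasSum, ?_⟩
  intro β hβ0 hβ1 hβ
  have hlogA : 0 < Real.log A := Real.log_pos hA
  have hβA : β * Real.log A < Real.log d := (lt_div_iff₀ hlogA).mp hβ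
  have hρlt : A ^ β < d := by
    rw [Real.rpow_def_of_pos hA0]
    calc Real.exp (Real.log A * β) < Real.exp (Real.log d) :=
          Real.exp_lt_exp.mpr (by linarith [mul_comm β (Real.log A)])
      _ = d := Real.exp_log hd0
  set ρ : ℝ := A ^ β / d with hρdef
  have hρ0 : 0 ≤ ρ := by positivity
  have hρ1 : ρ < 1 := (div_lt_one hd0).mpr hρlt
  set K : ℝ := (2 * |Cv|) ^ (1 - β) * L' ^ β with hKdef
  have hK0 : 0 ≤ K := by positivity
  refine ⟨K * (1 - ρ)⁻¹, fun x y => ?_⟩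
  set r : ℝ := dist x y with hrdef
  have hr : 0 ≤ r := dist_nonneg
  have hf : HasSum (fun n : ℕ => (d ^ n)⁻¹ * (v (Λ^[n] x) - v (Λ^[n] y)))
      ((∑' n : ℕ, (d ^ n)⁻¹ * v (Λ^[n] x)) - ∑' n : ℕ, (d ^ n)⁻¹ * v (Λ^[n] y)) := by
    simpa [mul_sub] using (hsum x).hasSum.sub (hsum y).hasSum
  have hbound : ∀ n : ℕ, |(d ^ n)⁻¹ * (v (Λ^[n] x) - v (Λ^[n] y))| ≤ K * r ^ β * ρ ^ n := by
    intro n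
    have h1 : |v (Λ^[n] x) - v (Λ^[n] y)| ≤ min (2 * |Cv|) (L' * (A ^ n * r)) := by
      apply le_min
      · calc |v (Λ^[n] x) - v (Λ^[n] y)| ≤ |v (Λ^[n] x)| + |v (Λ^[n] y)| := abs_sub _ _
          _ ≤ |Cv| + |Cv| := add_le_add (hCv _) (hCv _)
          _ = 2 * |Cv| := by ring
      · exact (hL' _ _).trans (mul_le_mul_of_nonneg_left (hdist n x y) hL'0)
    have hAnβ : ((A ^ n : ℝ)) ^ β = (A ^ β) ^ n := by
      rw [← Real.rpow_natCast A n, ← Real.rpow_mul hA0.le, mul_comm,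
        Real.rpow_mul hA0.le, Real.rpow_natCast]
    have h3 : (L' * (A ^ n * r)) ^ β = L' ^ β * ((A ^ β) ^ n * r ^ β) := by
      rw [Real.mul_rpow hL'0 (by positivity), Real.mul_rpow (by positivity) hr, hAnβ]
    have h2 : min (2 * |Cv|) (L' * (A ^ n * r)) ≤
        (2 * |Cv|) ^ (1 - β) * (L' ^ β * ((A ^ β) ^ n * r ^ β)) := by
      rw [← h3]
      exact min_le_rpow_interp (by positivity) (by positivity) hβ0 hβ1
    calc |(d ^ n)⁻¹ * (v (Λ^[n] x) - v (Λ^[n] y))|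
        = (d ^ n)⁻¹ * |v (Λ^[n] x) - v (Λ^[n] y)| := by
          rw [abs_mul, abs_inv, abs_pow, abs_of_pos hd0]
      _ ≤ (d ^ n)⁻¹ * ((2 * |Cv|) ^ (1 - β) * (L' ^ β * ((A ^ β) ^ n * r ^ β))) :=
          mul_le_mul_of_nonneg_left (h1.trans h2) (by positivity)
      _ = K * r ^ β * ρ ^ n := by
          rw [hKdef, hρdef, div_pow]
          field_simp
  have hgsum : Summable (fun n : ℕ => K * r ^ β * ρ ^ n) :=
    (summable_geometric_of_lt_one hρ0 hρ1).mul_left _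
  have habs : Summable (fun n : ℕ => |(d ^ n)⁻¹ * (v (Λ^[n] x) - v (Λ^[n] y))|) :=
    Summable.of_nonneg_of_le (fun n => abs_nonneg _) hbound hgsum
  calc |(∑' n : ℕ, (d ^ n)⁻¹ * v (Λ^[n] x)) - ∑' n : ℕ, (d ^ n)⁻¹ * v (Λ^[n] y)|
      = |∑' n : ℕ, (d ^ n)⁻¹ * (v (Λ^[n] x) - v (Λ^[n] y))| := by rw [hf.tsum_eq]
    _ ≤ ∑' n : ℕ, |(d ^ n)⁻¹ * (v (Λ^[n] x) - v (Λ^[n] y))| := by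
        have habs' : Summable (fun n : ℕ => ‖(d ^ n)⁻¹ * (v (Λ^[n] x) - v (Λ^[n] y))‖) := by
          simpa only [Real.norm_eq_abs] using habs
        simpa only [Real.norm_eq_abs] using
          norm_tsum_le_tsum_norm (f := fun n : ℕ => (d ^ n)⁻¹ * (v (Λ^[n] x) - v (Λ^[n] y))) habs'
    _ ≤ ∑' n : ℕ, K * r ^ β * ρ ^ n := Summable.tsum_le_tsum hbound habs hgsum
    _ = K * r ^ β * ∑' n : ℕ, ρ ^ n := tsum_mul_left
    _ = K * r ^ β * (1 - ρ)⁻¹ := by rw [tsum_geometric_of_lt_one hρ0 hρ1]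
    _ = K * (1 - ρ)⁻¹ * r ^ β := by ring
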